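/- Let p_i, p_j, p_k be pairwise distinct points in ℝ³ satisfying the angle constraints (C1) and (C2) with w_ik = 0, w_ki ≠ 0, and w_ij² + w_ji² ≠ 0. Then θ_k = π/2, θ_i + θ_j = π/2, w_ij·w_ji < 0, and θ_i = arctan √(−w_ij/w_ji). -/

import Mathlib

open EuclideanGeometry

theorem stmt_6 (p_i p_j p_k : EuclideanSpace ℝ (Fin 3))
    (hij : p_i ≠ p_j) (hik : p_i ≠ p_k) (hjk : p_j ≠ p_k)
    (w_ik w_ki w_ij w_ji : ℝ)
    (hC1 : w_ik * dist p_i p_k * dist p_i p_j * Real.cos (∠ p_j p_i p_k)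
          + w_ki * dist p_i p_k * dist p_j p_k * Real.cos (∠ p_i p_k p_j) = 0)
    (hC2 : w_ij * dist p_i p_k * dist p_i p_j * Real.cos (∠ p_j p_i p_k)
          + w_ji * dist p_i p_j * dist p_j p_k * Real.cos (∠ p_i p_j p_k) = 0)
    (h0 : w_ik = 0) (h1 : w_ki ≠ 0) (h2 : w_ij ^ 2 + w_ji ^ 2 ≠ 0) :
    ∠ p_i p_k p_j = Real.pi / 2 ∧
      ∠ p_j p_i p_k + ∠ p_i p_j p_k = Real.pi / 2 ∧
      w_ij * w_ji < 0 ∧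
      ∠ p_j p_i p_k = Real.arctan (Real.sqrt (-w_ij / w_ji)) := by
  set a := dist p_j p_k with ha
  set b := dist p_i p_k with hb
  set c := dist p_i p_j with hc
  have hapos : 0 < a := dist_pos.2 hjk
  have hbpos : 0 < b := dist_pos.2 hik
  have hcpos : 0 < c := dist_pos.2 hij
  clear_value a b c
  -- cos of angle at k is zero
  have h' : w_ki * (b * (a * Real.cos (∠ p_i p_k p_j))) = 0 := by
    linear_combination hC1 - (b * c * Real.cos (∠ p_j p_i p_k)) * h0
  have hcosk : Real.cos (∠ p_i p_k p_j) = 0 := by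
    rcases mul_eq_zero.1 h' with h | h
    · exact absurd h h1
    rcases mul_eq_zero.1 h with h | h
    · exact absurd h hbpos.ne'
    rcases mul_eq_zero.1 h with h | h
    · exact absurd h hapos.ne'
    · exact h
  have hk : ∠ p_i p_k p_j = Real.pi / 2 := by
    have h1' : ∠ p_i p_k p_j ∈ Set.Icc 0 Real.pi := ⟨angle_nonneg _ _ _, angle_le_pi _ _ _⟩
    have h2' : Real.pi / 2 ∈ Set.Icc 0 Real.pi := by
      constructor <;> linarith [Real.pi_pos]
    exact Real.injOn_cos h1' h2' (by rw [hcosk, Real.cos_pi_div_two])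
  -- Pythagoras
  have lawk := EuclideanGeometry.law_cos p_i p_k p_j
  rw [← hb, ← ha, ← hc, hcosk] at lawk
  have hpyth : c * c = b * b + a * a := by linear_combination lawk
  -- cos at i
  have lawi := EuclideanGeometry.law_cos p_j p_i p_k
  rw [dist_comm p_j p_i, dist_comm p_k p_i, ← hb, ← ha, ← hc] at lawi
  have hcosi : Real.cos (∠ p_j p_i p_k) * c = b := by
    apply mul_right_cancel₀ (b := 2 * b) (by positivity)
    linear_combination lawi + hpyth
  -- cos at j
  have lawj := EuclideanGeometry.law_cos p_i p_j p_k
  rw [dist_comm p_k p_j, ← hb, ← ha, ← hc] at lawj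
  have hcosj : Real.cos (∠ p_i p_j p_k) * c = a := by
    apply mul_right_cancel₀ (b := 2 * a) (by positivity)
    linear_combination lawj + hpyth
  -- angle sum
  have hsum : ∠ p_j p_i p_k + ∠ p_i p_j p_k = Real.pi / 2 := by
    have := EuclideanGeometry.angle_add_angle_add_angle_eq_pi p_j hik
    rw [angle_comm p_k p_i p_j, angle_comm p_j p_k p_i, hk] at this
    linarith
  -- relation w_ij b^2 + w_ji a^2 = 0
  have hrel : w_ij * (b * b) + w_ji * (a * a) = 0 := by
    linear_combination hC2 - (w_ij * b) * hcosi - (w_ji * a) * hcosj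
  have hwji : w_ji ≠ 0 := by
    intro h
    have hwij : w_ij = 0 := by
      have hb2 : (0:ℝ) < b * b := mul_pos hbpos hbpos
      nlinarith [hrel]
    exact h2 (by rw [hwij, h]; ring)
  have hprod : w_ij * w_ji < 0 := by
    have h5 : 0 < w_ji ^ 2 * (a * a) := by positivity
    have h6 : w_ij * w_ji * (b * b) = -(w_ji ^ 2 * (a * a)) := by
      linear_combination w_ji * hrel
    by_contra hcon
    push_neg at hcon
    have h7 := mul_nonneg hcon (mul_pos hbpos hbpos).le
    linarith
  -- the arctan equation
  have hcosi' : Real.cos (∠ p_j p_i p_k) = b / c :=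
    (eq_div_iff hcpos.ne').2 hcosi
  have hilt : ∠ p_j p_i p_k < Real.pi / 2 := by
    rcases lt_or_eq_of_le (by linarith [angle_nonneg p_i p_j p_k] :
        ∠ p_j p_i p_k ≤ Real.pi / 2) with h | h
    · exact h
    · rw [h, Real.cos_pi_div_two] at hcosi'
      exact absurd hcosi'.symm (by positivity)
  have hige : 0 ≤ ∠ p_j p_i p_k := angle_nonneg _ _ _
  have hsin : Real.sin (∠ p_j p_i p_k) = a / c := by
    rw [Real.sin_eq_sqrt_one_sub_cos_sq hige (angle_le_pi _ _ _), hcosi']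
    rw [show 1 - (b / c) ^ 2 = (a / c) ^ 2 by
      field_simp
      linear_combination hpyth]
    exact Real.sqrt_sq (by positivity)
  have htan : Real.tan (∠ p_j p_i p_k) = a / b := by
    rw [Real.tan_eq_sin_div_cos, hsin, hcosi', div_div_div_cancel_right₀ hcpos.ne' _ _]
  have hsq : Real.sqrt (-w_ij / w_ji) = a / b := by
    rw [show -w_ij / w_ji = (a / b) ^ 2 by
      rw [div_pow, div_eq_div_iff hwji (by positivity)]
      linear_combination -hrel]
    exact Real.sqrt_sq (by positivity)
  refine ⟨hk, hsum, hprod, ?_⟩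
  rw [hsq, ← htan, Real.arctan_tan (by linarith [Real.pi_pos]) hilt]
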